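/- Let (V₁, ν¹, τ, τ*) and (V₂, ν², τ, τ*) be strongly complete PN spaces with τ, τ* sup-continuous, and let σ be a triangle function with τ* ≫ σ and σ ≫ τ (domination). Then the σ-product (V₁ × V₂, ν¹ σ ν², τ, τ*), where (ν¹ σ ν²)(p,q) := σ(ν¹_p, ν²_q), is a strongly complete PN space. -/

import Mathlib

open Filter Topology Set

/-- A distribution function in `Δ⁺`: nondecreasing, left-continuous,
vanishing on `(-∞,0]` and bounded by `1`. -/
structure DistFun where
  toFun : ℝ → ℝ
  mono' : Monotone toFun
  leftCont' : ∀ x, Filter.Tendsto toFun (nhdsWithin x (Set.Iio x)) (nhds (toFun x))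
  zero' : ∀ x ≤ (0 : ℝ), toFun x = 0
  le_one' : ∀ x, toFun x ≤ 1

instance : CoeFun DistFun (fun _ => ℝ → ℝ) := ⟨DistFun.toFun⟩

/-- Pointwise order on `Δ⁺`. -/
instance : LE DistFun := ⟨fun F G => ∀ x, F.toFun x ≤ G.toFun x⟩

/-- The unit step distribution function `ε_a` for `a ≥ 0`. -/
noncomputable def unitStep (a : ℝ) (_ha : 0 ≤ a) : DistFun where
  toFun x := if x ≤ a then 0 else 1
  mono' := by
    intro x y hxy
    by_cases hx : x ≤ a <;> by_cases hy : y ≤ a <;> simp [hx, hy] <;> linarith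
  leftCont' := by
    intro x
    by_cases hx : x ≤ a
    · have h : (fun y => if y ≤ a then (0:ℝ) else 1) =ᶠ[nhdsWithin x (Set.Iio x)]
          fun _ => (0:ℝ) := by
        filter_upwards [self_mem_nhdsWithin] with y hy
        exact if_pos ((le_of_lt hy).trans hx)
      simpa [if_pos hx] using (tendsto_const_nhds (α := ℝ)).congr' h.symm
    · have hax : a < x := not_le.mp hx
      have h : (fun y => if y ≤ a then (0:ℝ) else 1) =ᶠ[nhdsWithin x (Set.Iio x)]
          fun _ => (1:ℝ) := by
        filter_upwards [(eventually_gt_nhds hax).filter_mono nhdsWithin_le_nhds] with y hy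
        exact if_neg (not_le.mpr hy)
      simpa [if_neg hx] using (tendsto_const_nhds (α := ℝ)).congr' h.symm
  zero' := fun x hx => if_pos (hx.trans _ha)
  le_one' := by intro x; by_cases h : x ≤ a <;> simp [h]

/-- The maximal element `ε₀` of `Δ⁺`. -/
noncomputable def eps0 : DistFun := unitStep 0 le_rfl

/-- The one-sided Lévy condition `(F,G;h)`. -/
def levyCond (F G : DistFun) (h : ℝ) : Prop :=
  ∀ x : ℝ, -(1/h) < x → x < 1/h →
    F.toFun (x - h) - h ≤ G.toFun x ∧ G.toFun x ≤ F.toFun (x + h) + h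

/-- The Sibley (modified Lévy) metric on `Δ⁺`. -/
noncomputable def sibley (F G : DistFun) : ℝ :=
  sInf {h : ℝ | 0 < h ∧ h ≤ 1 ∧ levyCond F G h ∧ levyCond G F h}

/-- Triangle function: associative, commutative, nondecreasing binary
operation on `Δ⁺` with identity `ε₀`. -/
structure IsTriangleFun (τ : DistFun → DistFun → DistFun) : Prop where
  comm : ∀ F G, τ F G = τ G F
  assoc : ∀ F G H, τ (τ F G) H = τ F (τ G H)
  mono : ∀ F G H, F ≤ G → τ F H ≤ τ G H
  ident : ∀ F, τ F eps0 = F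

/-- Continuity of a triangle function w.r.t. the Sibley metric (sequential form). -/
def TriCont (τ : DistFun → DistFun → DistFun) : Prop :=
  ∀ (F G : ℕ → DistFun) (F₀ G₀ : DistFun),
    Filter.Tendsto (fun n => sibley (F n) F₀) Filter.atTop (nhds 0) →
    Filter.Tendsto (fun n => sibley (G n) G₀) Filter.atTop (nhds 0) →
    Filter.Tendsto (fun n => sibley (τ (F n) (G n)) (τ F₀ G₀)) Filter.atTop (nhds 0)

/-- Sup-continuity of a triangle function: `τ (sup_i F_i) G = sup_i τ (F_i) G`
(pointwise). -/
def SupCont (τ : DistFun → DistFun → DistFun) : Prop :=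
  ∀ {ι : Type} [Nonempty ι] (F : ι → DistFun) (S G : DistFun),
    (∀ x, S.toFun x = ⨆ i, (F i).toFun x) →
    ∀ x, (τ S G).toFun x = ⨆ i, (τ (F i) G).toFun x

/-- Domination `τ₁ ≫ τ₂` of triangle functions. -/
def Dominates (τ₁ τ₂ : DistFun → DistFun → DistFun) : Prop :=
  ∀ F₁ F₂ G₁ G₂, τ₂ (τ₁ F₁ F₂) (τ₁ G₁ G₂) ≤ τ₁ (τ₂ F₁ G₁) (τ₂ F₂ G₂)

/-- A probabilistic pseudo-normed space `(V, ν, τ, τ*)`. -/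
structure IsPPNSpace {V : Type*} [AddCommGroup V] [Module ℝ V]
    (ν : V → DistFun) (τ τs : DistFun → DistFun → DistFun) : Prop where
  tri : IsTriangleFun τ
  tri_s : IsTriangleFun τs
  cont : TriCont τ
  cont_s : TriCont τs
  tau_le : ∀ F G, τ F G ≤ τs F G
  N1' : ν 0 = eps0
  N2 : ∀ p, ν (-p) = ν p
  N3 : ∀ p q, τ (ν p) (ν q) ≤ ν (p + q)
  N4 : ∀ (p : V) (α : ℝ), 0 ≤ α → α ≤ 1 →
    ν p ≤ τs (ν (α • p)) (ν ((1 - α) • p))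

/-- A probabilistic normed space `(V, ν, τ, τ*)`. -/
structure IsPNSpace {V : Type*} [AddCommGroup V] [Module ℝ V]
    (ν : V → DistFun) (τ τs : DistFun → DistFun → DistFun)
    extends IsPPNSpace ν τ τs : Prop where
  N1 : ∀ p, ν p = eps0 ↔ p = 0

/-- The strong topology of a PN space, generated by the strong neighbourhoods
`N_p(t) = {q : ν_{q-p}(t) > 1 - t}`. -/
def strongTop {V : Type*} [AddCommGroup V] (ν : V → DistFun) : TopologicalSpace V :=
  TopologicalSpace.generateFrom
    {S | ∃ (p : V) (t : ℝ), 0 < t ∧ S = {q | 1 - t < (ν (q - p)).toFun t}}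

/-- A set is closed in the strong topology. -/
def StrongClosed {V : Type*} [AddCommGroup V] (ν : V → DistFun) (S : Set V) : Prop :=
  @IsClosed V (strongTop ν) S

/-- A strong Cauchy sequence. -/
def StrongCauchy {V : Type*} [AddCommGroup V] (ν : V → DistFun) (p : ℕ → V) : Prop :=
  ∀ t : ℝ, 0 < t → ∃ N : ℕ, ∀ m n, N ≤ m → N ≤ n → 1 - t < (ν (p n - p m)).toFun t

/-- Strong convergence of a sequence to a point. -/
def StrongConv {V : Type*} [AddCommGroup V] (ν : V → DistFun) (p : ℕ → V) (x : V) : Prop :=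
  ∀ t : ℝ, 0 < t → ∃ N : ℕ, ∀ n, N ≤ n → 1 - t < (ν (p n - x)).toFun t

/-- Strong completeness. -/
def StrongComplete {V : Type*} [AddCommGroup V] (ν : V → DistFun) : Prop :=
  ∀ p : ℕ → V, StrongCauchy ν p → ∃ x, StrongConv ν p x

/- ## Auxiliary lemmas -/

lemma DistFun.ext' : ∀ {F G : DistFun}, (∀ x, F.toFun x = G.toFun x) → F = G := by
  rintro ⟨f, _, _, _, _⟩ ⟨g, _, _, _, _⟩ h
  have : f = g := funext h
  subst this; rfl

lemma DistFun.nonneg (F : DistFun) (x : ℝ) : 0 ≤ F.toFun x := by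
  rcases le_or_gt x 0 with h | h
  · rw [F.zero' x h]
  · calc (0:ℝ) = F.toFun 0 := (F.zero' 0 le_rfl).symm
      _ ≤ F.toFun x := F.mono' h.le

lemma eps0_apply (x : ℝ) : eps0.toFun x = if x ≤ 0 then 0 else 1 := rfl

lemma DistFun.le_eps0 (F : DistFun) : F ≤ eps0 := by
  intro x
  rw [eps0_apply]
  split_ifs with h
  · rw [F.zero' x h]
  · exact F.le_one' x

lemma DistFun.le_refl' (F : DistFun) : F ≤ F := fun _ => le_rfl

lemma DistFun.le_trans' {F G H : DistFun} (h1 : F ≤ G) (h2 : G ≤ H) : F ≤ H :=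
  fun x => (h1 x).trans (h2 x)

lemma tri_mono₂ {σ : DistFun → DistFun → DistFun} (hσ : IsTriangleFun σ)
    {F F' G G' : DistFun} (h1 : F ≤ F') (h2 : G ≤ G') : σ F G ≤ σ F' G' := by
  have a : σ F G ≤ σ F' G := hσ.mono _ _ _ h1
  have b : σ G F' ≤ σ G' F' := hσ.mono _ _ _ h2
  rw [hσ.comm G F', hσ.comm G' F'] at b
  exact DistFun.le_trans' a b

lemma tri_le_left {σ : DistFun → DistFun → DistFun} (hσ : IsTriangleFun σ)
    (F G : DistFun) : σ F G ≤ F := by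
  have := tri_mono₂ hσ (DistFun.le_refl' F) (DistFun.le_eps0 G)
  rwa [hσ.ident] at this

lemma tri_le_right {σ : DistFun → DistFun → DistFun} (hσ : IsTriangleFun σ)
    (F G : DistFun) : σ F G ≤ G := by
  rw [hσ.comm]; exact tri_le_left hσ G F

lemma tau_le_sigma {τ σ : DistFun → DistFun → DistFun} (hτ : IsTriangleFun τ)
    (hσ : IsTriangleFun σ) (hdom : Dominates σ τ) (F G : DistFun) : τ F G ≤ σ F G := by
  have h := hdom F eps0 eps0 G
  rwa [hσ.comm eps0 G, hσ.ident G, hσ.ident F, hτ.comm eps0 G, hτ.ident G, hτ.ident F] at h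

lemma sigma_eq_eps0 {σ : DistFun → DistFun → DistFun} (hσ : IsTriangleFun σ)
    {F G : DistFun} (h : σ F G = eps0) : F = eps0 ∧ G = eps0 := by
  have hl := tri_le_left hσ F G
  have hr := tri_le_right hσ F G
  rw [h] at hl hr
  exact ⟨DistFun.ext' (fun x => le_antisymm (DistFun.le_eps0 F x) (hl x)),
    DistFun.ext' (fun x => le_antisymm (DistFun.le_eps0 G x) (hr x))⟩

lemma one_mem_sibleySet (F : DistFun) :
    (1:ℝ) ∈ {h : ℝ | 0 < h ∧ h ≤ 1 ∧ levyCond F eps0 h ∧ levyCond eps0 F h} := by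
  refine ⟨one_pos, le_rfl, ?_, ?_⟩
  · intro x _ _
    constructor
    · have h1 := F.le_one' (x - 1)
      have h2 := DistFun.nonneg eps0 x
      linarith
    · have h1 := eps0.le_one' x
      have h2 := DistFun.nonneg F (x + 1)
      linarith
  · intro x _ _
    constructor
    · have h1 := eps0.le_one' (x - 1)
      have h2 := DistFun.nonneg F x
      linarith
    · have h1 := F.le_one' x
      have h2 := DistFun.nonneg eps0 (x + 1)
      linarith

lemma sibley_nonneg (F G : DistFun) : 0 ≤ sibley F G :=
  Real.sInf_nonneg (fun _ hx => hx.1.le)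

lemma sibley_eps0_le (F : DistFun) {s : ℝ} (hs0 : 0 < s) (hs1 : s ≤ 1)
    (h : 1 - s < F.toFun s) : sibley F eps0 ≤ s := by
  apply csInf_le ⟨0, fun x hx => hx.1.le⟩
  refine ⟨hs0, hs1, ?_, ?_⟩
  · intro x _ _
    constructor
    · rcases le_or_gt x 0 with hx | hx
      · have hxs : x - s ≤ 0 := by linarith
        rw [F.zero' _ hxs, eps0_apply, if_pos hx]; linarith
      · rw [eps0_apply, if_neg (not_le.mpr hx)]
        have := F.le_one' (x - s); linarith
    · rcases le_or_gt x 0 with hx | hx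
      · rw [eps0_apply, if_pos hx]
        have := DistFun.nonneg F (x + s); linarith
      · rw [eps0_apply, if_neg (not_le.mpr hx)]
        have := F.mono' (show s ≤ x + s by linarith)
        linarith
  · intro x _ _
    constructor
    · rcases le_or_gt (x - s) 0 with hx | hx
      · rw [eps0_apply, if_pos hx]
        have := DistFun.nonneg F x; linarith
      · rw [eps0_apply, if_neg (not_le.mpr hx)]
        have := F.mono' (show s ≤ x by linarith)
        linarith
    · rcases le_or_gt (x + s) 0 with hx | hx
      · rw [eps0_apply, if_pos hx, F.zero' x (by linarith)]; linarith
      · rw [eps0_apply, if_neg (not_le.mpr hx)]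
        have := F.le_one' x; linarith

lemma sibley_eps0_lt (F : DistFun) {t : ℝ} (ht0 : 0 < t) (ht1 : t ≤ 1)
    (h : sibley F eps0 < t) : 1 - t < F.toFun t := by
  obtain ⟨h', hmem, hh⟩ := exists_lt_of_csInf_lt ⟨1, one_mem_sibleySet F⟩ h
  obtain ⟨hp, _, _, hlev⟩ := hmem
  have hinv : 0 < 1 / h' := by positivity
  have hx1 : t < 1 / h' := by
    rw [lt_div_iff₀ hp]; nlinarith
  have hkey := (hlev t (by linarith) hx1).1
  rw [eps0_apply, if_neg (not_le.mpr (show (0:ℝ) < t - h' by linarith))] at hkey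
  linarith

lemma tendsto_sibley_eps0 (F : ℕ → DistFun)
    (h : ∀ t : ℝ, 0 < t → ∃ N, ∀ n, N ≤ n → 1 - t < (F n).toFun t) :
    Filter.Tendsto (fun n => sibley (F n) eps0) Filter.atTop (nhds 0) := by
  rw [Metric.tendsto_atTop]
  intro ε hε
  have hs0 : (0:ℝ) < min (ε/2) 1 := lt_min (by linarith) one_pos
  obtain ⟨N, hN⟩ := h (min (ε/2) 1) hs0
  refine ⟨N, fun n hn => ?_⟩
  have h1 := sibley_eps0_le (F n) hs0 (min_le_right _ _) (hN n hn)
  have h2 := sibley_nonneg (F n) eps0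
  have h3 : min (ε/2) 1 ≤ ε/2 := min_le_left _ _
  rw [Real.dist_eq, sub_zero, abs_of_nonneg h2]
  linarith

theorem sigma_product_PNB {V₁ V₂ : Type*} [AddCommGroup V₁] [Module ℝ V₁]
    [AddCommGroup V₂] [Module ℝ V₂]
    (ν₁ : V₁ → DistFun) (ν₂ : V₂ → DistFun)
    (τ τs σ : DistFun → DistFun → DistFun)
    (h₁ : IsPNSpace ν₁ τ τs) (h₂ : IsPNSpace ν₂ τ τs)
    (hτ : SupCont τ) (hτs : SupCont τs)
    (hσ : IsTriangleFun σ)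
    (hdom₁ : Dominates τs σ) (hdom₂ : Dominates σ τ)
    (hc₁ : StrongComplete ν₁) (hc₂ : StrongComplete ν₂) :
    IsPNSpace (fun pq : V₁ × V₂ => σ (ν₁ pq.1) (ν₂ pq.2)) τ τs ∧
    StrongComplete (fun pq : V₁ × V₂ => σ (ν₁ pq.1) (ν₂ pq.2)) := by
  constructor
  · refine ⟨⟨h₁.tri, h₁.tri_s, h₁.cont, h₁.cont_s, h₁.tau_le, ?_, ?_, ?_, ?_⟩, ?_⟩
    · -- N1'
      show σ (ν₁ (0:V₁×V₂).1) (ν₂ (0:V₁×V₂).2) = eps0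
      rw [Prod.fst_zero, Prod.snd_zero, h₁.N1', h₂.N1', hσ.ident]
    · -- N2
      intro p
      show σ (ν₁ (-p).1) (ν₂ (-p).2) = σ (ν₁ p.1) (ν₂ p.2)
      rw [Prod.fst_neg, Prod.snd_neg, h₁.N2, h₂.N2]
    · -- N3
      intro p q
      show τ (σ (ν₁ p.1) (ν₂ p.2)) (σ (ν₁ q.1) (ν₂ q.2)) ≤
        σ (ν₁ (p + q).1) (ν₂ (p + q).2)
      rw [Prod.fst_add, Prod.snd_add]
      exact DistFun.le_trans' (hdom₂ (ν₁ p.1) (ν₂ p.2) (ν₁ q.1) (ν₂ q.2))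
        (tri_mono₂ hσ (h₁.N3 p.1 q.1) (h₂.N3 p.2 q.2))
    · -- N4
      intro p α hα0 hα1
      show σ (ν₁ p.1) (ν₂ p.2) ≤
        τs (σ (ν₁ (α • p).1) (ν₂ (α • p).2)) (σ (ν₁ ((1-α) • p).1) (ν₂ ((1-α) • p).2))
      rw [Prod.smul_fst, Prod.smul_snd, Prod.smul_fst, Prod.smul_snd]
      refine DistFun.le_trans' (tri_mono₂ hσ (h₁.N4 p.1 α hα0 hα1) (h₂.N4 p.2 α hα0 hα1)) ?_
      exact hdom₁ (ν₁ (α • p.1)) (ν₁ ((1-α) • p.1)) (ν₂ (α • p.2)) (ν₂ ((1-α) • p.2))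
    · -- N1
      intro p
      constructor
      · intro h
        obtain ⟨hF, hG⟩ := sigma_eq_eps0 hσ h
        have e1 : p.1 = 0 := (h₁.N1 p.1).1 hF
        have e2 : p.2 = 0 := (h₂.N1 p.2).1 hG
        exact Prod.ext e1 e2
      · rintro rfl
        show σ (ν₁ (0:V₁×V₂).1) (ν₂ (0:V₁×V₂).2) = eps0
        rw [Prod.fst_zero, Prod.snd_zero, h₁.N1', h₂.N1', hσ.ident]
  · -- Strong completeness
    intro p hp
    have cq₁ : StrongCauchy ν₁ (fun n => (p n).1) := by
      intro t ht
      obtain ⟨N, hN⟩ := hp t ht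
      refine ⟨N, fun m n hm hn => ?_⟩
      have h := hN m n hm hn
      have hle := tri_le_left hσ (ν₁ ((p n - p m).1)) (ν₂ ((p n - p m).2))
      have := lt_of_lt_of_le h (hle t)
      rwa [Prod.fst_sub] at this
    have cq₂ : StrongCauchy ν₂ (fun n => (p n).2) := by
      intro t ht
      obtain ⟨N, hN⟩ := hp t ht
      refine ⟨N, fun m n hm hn => ?_⟩
      have h := hN m n hm hn
      have hle := tri_le_right hσ (ν₁ ((p n - p m).1)) (ν₂ ((p n - p m).2))
      have := lt_of_lt_of_le h (hle t)
      rwa [Prod.snd_sub] at this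
    obtain ⟨x, hx⟩ := hc₁ _ cq₁
    obtain ⟨y, hy⟩ := hc₂ _ cq₂
    refine ⟨(x, y), ?_⟩
    intro t ht
    rcases le_or_gt t 1 with ht1 | ht1
    · -- use continuity of τ and τ ≤ σ
      have hF := tendsto_sibley_eps0 (fun n => ν₁ ((p n).1 - x)) (fun s hs => hx s hs)
      have hG := tendsto_sibley_eps0 (fun n => ν₂ ((p n).2 - y)) (fun s hs => hy s hs)
      have hτc := h₁.cont _ _ eps0 eps0 hF hG
      rw [h₁.tri.ident] at hτc
      obtain ⟨N, hN⟩ := Metric.tendsto_atTop.mp hτc t ht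
      refine ⟨N, fun n hn => ?_⟩
      have hd := hN n hn
      rw [Real.dist_eq, sub_zero, abs_of_nonneg (sibley_nonneg _ _)] at hd
      have hkey := sibley_eps0_lt _ ht ht1 hd
      have hle := tau_le_sigma h₁.tri hσ hdom₂ (ν₁ ((p n).1 - x)) (ν₂ ((p n).2 - y))
      have := lt_of_lt_of_le hkey (hle t)
      show 1 - t < (σ (ν₁ ((p n - (x,y)).1)) (ν₂ ((p n - (x,y)).2))).toFun t
      rwa [Prod.fst_sub, Prod.snd_sub]
    · refine ⟨0, fun n _ => ?_⟩
      have := DistFun.nonneg (σ (ν₁ ((p n - (x,y)).1)) (ν₂ ((p n - (x,y)).2))) t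
      show 1 - t < (σ (ν₁ ((p n - (x,y)).1)) (ν₂ ((p n - (x,y)).2))).toFun t
      linarith
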